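/- Let G be a connected graph with minimum degree δ(G) ≥ 4 and at least 5 vertices. Then the total restrained bondage number satisfies b_tr(G) ≤ ξ(G) + Δ(G) − 2, where ξ(G) = min{deg(x)+deg(y)−2 : xy ∈ E(G)} and Δ(G) is the maximum degree. -/

import Mathlib

open SimpleGraph Finset

variable {V : Type*} [Fintype V] [DecidableEq V]

/-- The number of orbits (cycles together with fixed points) of a permutation of a finite type. -/
noncomputable def permNumOrbits {α : Type*} [Fintype α] [DecidableEq α] (ψ : Equiv.Perm α) : ℕ :=
  Multiset.card ψ.cycleType + (Finset.univ.filter fun a => ψ a = a).card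

/-- A combinatorial (2-cell) embedding scheme of a graph on a surface:
a rotation system together with an edge signature (Mohar–Thomassen). -/
structure SimpleGraph.EmbeddingScheme (G : SimpleGraph V) [DecidableRel G.Adj] where
  rot : Equiv.Perm G.Dart
  rot_fst : ∀ d : G.Dart, (rot d).toProd.1 = d.toProd.1
  rot_cyclic : ∀ d e : G.Dart, d.toProd.1 = e.toProd.1 → ∃ k : ℕ, (rot ^ k) d = e
  sign : G.Dart → ℤˣ
  sign_symm : ∀ d : G.Dart, sign d.symm = sign d

namespace SimpleGraph.EmbeddingScheme

variable {G : SimpleGraph V} [DecidableRel G.Adj] (S : G.EmbeddingScheme)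

def swapPerm : Equiv.Perm (G.Dart × ℤˣ) :=
  Function.Involutive.toPerm (fun p => (p.1.symm, p.2 * S.sign p.1)) (by
    intro p
    simp [SimpleGraph.Dart.symm_symm, S.sign_symm p.1, mul_assoc, Int.units_mul_self])

def rotPerm : Equiv.Perm (G.Dart × ℤˣ) where
  toFun p := ((S.rot ^ (p.2 : ℤ)) p.1, p.2)
  invFun p := ((S.rot ^ (-(p.2 : ℤ))) p.1, p.2)
  left_inv p := by
    simp [← Equiv.Perm.mul_apply, ← zpow_add]
  right_inv p := by
    show ((S.rot ^ (p.2 : ℤ)) ((S.rot ^ (-(p.2 : ℤ))) p.1), p.2) = p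
    rw [← Equiv.Perm.mul_apply, ← zpow_add]
    simp

/-- The face-tracing permutation on signed darts. -/
def faceMap : Equiv.Perm (G.Dart × ℤˣ) := S.swapPerm.trans S.rotPerm

/-- Each face is traced by exactly two orbits of the face-tracing permutation. -/
noncomputable def numFaces : ℕ := permNumOrbits S.faceMap / 2

/-- The Euler characteristic of the closed surface determined by the scheme. -/
noncomputable def eulerChar : ℤ :=
  (Fintype.card V : ℤ) - (G.edgeFinset.card : ℤ) + (S.numFaces : ℤ)

/-- The scheme describes an embedding on an orientable surface iff its signature
is switching-equivalent to the all-positive signature. -/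
def IsOrientable : Prop := ∃ θ : V → ℤˣ, ∀ d : G.Dart, S.sign d = θ d.toProd.1 * θ d.toProd.2

end SimpleGraph.EmbeddingScheme

/-- `G` has orientable genus `g`. -/
def SimpleGraph.HasOrientableGenus (G : SimpleGraph V) [DecidableRel G.Adj] (g : ℕ) : Prop :=
  (∃ S : G.EmbeddingScheme, S.IsOrientable ∧ S.eulerChar = 2 - 2 * (g : ℤ)) ∧
  ∀ g' : ℕ, g' < g → ¬ ∃ S : G.EmbeddingScheme, S.IsOrientable ∧ S.eulerChar = 2 - 2 * (g' : ℤ)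

/-- `G` has nonorientable genus `k`. -/
def SimpleGraph.HasNonorientableGenus (G : SimpleGraph V) [DecidableRel G.Adj] (k : ℕ) : Prop :=
  (∃ S : G.EmbeddingScheme, ¬ S.IsOrientable ∧ S.eulerChar = 2 - (k : ℤ)) ∧
  ∀ k' : ℕ, k' < k → ¬ ∃ S : G.EmbeddingScheme, ¬ S.IsOrientable ∧ S.eulerChar = 2 - (k' : ℤ)

/-- `G` is planar: every component embeds in the sphere. -/
def SimpleGraph.IsPlanar (G : SimpleGraph V) [DecidableRel G.Adj] : Prop :=
  ∃ S : G.EmbeddingScheme, S.IsOrientable ∧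
    S.eulerChar = 2 * (Nat.card G.ConnectedComponent : ℤ)

/-- `S` is a total dominating set: every vertex has a neighbour in `S`. -/
def SimpleGraph.IsTotalDominatingSet (G : SimpleGraph V) (S : Finset V) : Prop :=
  ∀ v : V, ∃ u ∈ S, G.Adj u v

noncomputable def SimpleGraph.totalDominationNumber (G : SimpleGraph V) : ℕ :=
  sInf {k : ℕ | ∃ S : Finset V, G.IsTotalDominatingSet S ∧ S.card = k}

/-- The spanning subgraph of `G` keeping only edges meeting `S`. -/
def SimpleGraph.weakSubgraph (G : SimpleGraph V) (S : Finset V) : SimpleGraph V where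
  Adj u v := G.Adj u v ∧ (u ∈ S ∨ v ∈ S)
  symm := ⟨fun u v h => ⟨h.1.symm, h.2.symm⟩⟩
  loopless := ⟨fun v h => G.loopless.irrefl v h.1⟩

/-- `S` is a weakly connected dominating set. -/
def SimpleGraph.IsWeaklyConnectedDominatingSet (G : SimpleGraph V) (S : Finset V) : Prop :=
  S.Nonempty ∧ (G.weakSubgraph S).Connected

noncomputable def SimpleGraph.weaklyConnectedDominationNumber (G : SimpleGraph V) : ℕ :=
  sInf {k : ℕ | ∃ S : Finset V, G.IsWeaklyConnectedDominatingSet S ∧ S.card = k}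

/-- `S` is a connected dominating set. -/
def SimpleGraph.IsConnectedDominatingSet (G : SimpleGraph V) (S : Finset V) : Prop :=
  (∀ v ∉ S, ∃ u ∈ S, G.Adj u v) ∧ (G.induce (S : Set V)).Connected

noncomputable def SimpleGraph.connectedDominationNumber (G : SimpleGraph V) : ℕ :=
  sInf {k : ℕ | ∃ S : Finset V, G.IsConnectedDominatingSet S ∧ S.card = k}

/-- `S` is a restrained dominating set. -/
def SimpleGraph.IsRestrainedDominatingSet (G : SimpleGraph V) (S : Finset V) : Prop :=
  ∀ v ∉ S, (∃ u ∈ S, G.Adj u v) ∧ (∃ w ∉ S, G.Adj w v)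

noncomputable def SimpleGraph.restrainedDominationNumber (G : SimpleGraph V) : ℕ :=
  sInf {k : ℕ | ∃ S : Finset V, G.IsRestrainedDominatingSet S ∧ S.card = k}

/-- The restrained bondage number. -/
noncomputable def SimpleGraph.restrainedBondageNumber (G : SimpleGraph V) : ℕ :=
  sInf {k : ℕ | ∃ F : Finset (Sym2 V), ↑F ⊆ G.edgeSet ∧ F.card = k ∧
    G.restrainedDominationNumber < (G.deleteEdges ↑F).restrainedDominationNumber}

/-- `S` is a total restrained dominating set. -/
def SimpleGraph.IsTotalRestrainedDominatingSet (G : SimpleGraph V) (S : Finset V) : Prop :=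
  (∀ v : V, ∃ u ∈ S, G.Adj u v) ∧ ∀ v ∉ S, ∃ w ∉ S, G.Adj w v

noncomputable def SimpleGraph.totalRestrainedDominationNumber (G : SimpleGraph V) : ℕ :=
  sInf {k : ℕ | ∃ S : Finset V, G.IsTotalRestrainedDominatingSet S ∧ S.card = k}

/-- The total restrained bondage number (`⊤` if no suitable edge set exists). -/
noncomputable def SimpleGraph.totalRestrainedBondageNumber (G : SimpleGraph V) : ℕ∞ :=
  sInf {k : ℕ∞ | ∃ F : Finset (Sym2 V), ↑F ⊆ G.edgeSet ∧ (F.card : ℕ∞) = k ∧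
    (∀ v : V, ∃ u : V, (G.deleteEdges ↑F).Adj u v) ∧
    G.totalRestrainedDominationNumber < (G.deleteEdges ↑F).totalRestrainedDominationNumber}

/-- Roman dominating function. -/
def SimpleGraph.IsRomanDominatingFunction (G : SimpleGraph V) (f : V → ℕ) : Prop :=
  (∀ v : V, f v ≤ 2) ∧ ∀ v : V, f v = 0 → ∃ u : V, G.Adj u v ∧ f u = 2

noncomputable def SimpleGraph.romanDominationNumber (G : SimpleGraph V) : ℕ :=
  sInf {k : ℕ | ∃ f : V → ℕ, G.IsRomanDominatingFunction f ∧ ∑ v : V, f v = k}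

noncomputable def SimpleGraph.romanBondageNumber (G : SimpleGraph V) : ℕ :=
  sInf {k : ℕ | ∃ F : Finset (Sym2 V), ↑F ⊆ G.edgeSet ∧ F.card = k ∧
    G.romanDominationNumber < (G.deleteEdges ↑F).romanDominationNumber}

/-- The minimum edge-degree `ξ(G)`. -/
noncomputable def SimpleGraph.minEdgeDegree (G : SimpleGraph V) [DecidableRel G.Adj] : ℕ :=
  sInf {k : ℕ | ∃ d : G.Dart, G.degree d.toProd.1 + G.degree d.toProd.2 - 2 = k}

/-- A restricted edge-cut: removing it disconnects `G` leaving no isolated vertex. -/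
def SimpleGraph.IsRestrictedEdgeCut (G : SimpleGraph V) (F : Finset (Sym2 V)) : Prop :=
  ↑F ⊆ G.edgeSet ∧ ¬ (G.deleteEdges ↑F).Connected ∧
    ∀ v : V, ∃ u : V, (G.deleteEdges ↑F).Adj u v

/-- The restricted edge-connectivity `λ'(G)`. -/
noncomputable def SimpleGraph.restrictedEdgeConnectivity (G : SimpleGraph V) : ℕ :=
  sInf {k : ℕ | ∃ F : Finset (Sym2 V), G.IsRestrictedEdgeCut F ∧ F.card = k}

/-- `G` is a star: all edges share a common vertex. -/
def SimpleGraph.IsStar (G : SimpleGraph V) : Prop :=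
  ∃ c : V, ∀ e ∈ G.edgeSet, c ∈ e

/-- The average degree `2|E|/|V|` of `G`. -/
noncomputable def SimpleGraph.averageDegree (G : SimpleGraph V) [DecidableRel G.Adj] : ℝ :=
  2 * (G.edgeFinset.card : ℝ) / (Fintype.card V : ℝ)

def h1 (x : ℕ) : ℕ := if x ≤ 3 then 2 * x + 13 else 4 * x + 7
def h2 (x : ℕ) : ℕ := if x = 0 then 8 else 4 * x + 5
def k1 (x : ℕ) : ℕ := if x ≤ 2 then 2 * x + 11 else if x ≤ 5 then 2 * x + 9 else 2 * x + 7
def k2 (x : ℕ) : ℕ := if x = 1 then 8 else 2 * x + 5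

lemma trds_exists_min {V : Type*} [Fintype V] [DecidableEq V] (K : SimpleGraph V)
    (h : ∀ v : V, ∃ u : V, K.Adj u v) :
    ∃ S : Finset V, K.IsTotalRestrainedDominatingSet S ∧
      S.card = K.totalRestrainedDominationNumber := by
  have huniv : K.IsTotalRestrainedDominatingSet Finset.univ :=
    ⟨fun v => (h v).elim fun u hu => ⟨u, Finset.mem_univ u, hu⟩,
     fun v hv => absurd (Finset.mem_univ v) hv⟩
  have hmem : K.totalRestrainedDominationNumber ∈
      {k : ℕ | ∃ S : Finset V, K.IsTotalRestrainedDominatingSet S ∧ S.card = k} :=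
    Nat.sInf_mem ⟨(Finset.univ : Finset V).card, Finset.univ, huniv, rfl⟩
  obtain ⟨S, hS, hcard⟩ := hmem
  exact ⟨S, hS, hcard⟩

lemma trds_le {V : Type*} [Fintype V] [DecidableEq V] (K : SimpleGraph V)
    (S : Finset V) (h : K.IsTotalRestrainedDominatingSet S) :
    K.totalRestrainedDominationNumber ≤ S.card :=
  Nat.sInf_le ⟨S, h, rfl⟩

lemma key_lemma {V : Type*} [Fintype V] [DecidableEq V] (G : SimpleGraph V) [DecidableRel G.Adj]
    (hδ : ∀ v : V, 4 ≤ G.degree v) (x y z : V) (hxy : G.Adj x y) (hyz : G.Adj y z)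
    (hxz : x ≠ z) :
    ∃ F : Finset (Sym2 V), ↑F ⊆ G.edgeSet ∧
      F.card + 4 ≤ G.degree x + G.degree y + G.degree z ∧
      (∀ v : V, ∃ u : V, (G.deleteEdges ↑F).Adj u v) ∧
      G.totalRestrainedDominationNumber < (G.deleteEdges ↑F).totalRestrainedDominationNumber := by
  classical
  have hxyne : x ≠ y := hxy.ne
  have hyzne : y ≠ z := hyz.ne
  set ex : Sym2 V := s(x, y) with hexdef
  set ez : Sym2 V := s(y, z) with hezdef
  have hexez : ex ≠ ez := by
    intro h
    rw [hexdef, hezdef, Sym2.eq_iff] at h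
    rcases h with ⟨h1, h2⟩ | ⟨h1, h2⟩
    · exact hxyne h1
    · exact hxz h1
  set F : Finset (Sym2 V) :=
    ((G.incidenceFinset x ∪ G.incidenceFinset y ∪ G.incidenceFinset z) \ {ex, ez}) with hF
  have hincmem : ∀ (e : Sym2 V) (v : V), e ∈ G.incidenceFinset v ↔ e ∈ G.edgeSet ∧ v ∈ e := by
    intro e v
    simp [SimpleGraph.mem_incidenceFinset, SimpleGraph.incidenceSet]
  have hFsub : ↑F ⊆ G.edgeSet := by
    intro e he
    rw [Finset.mem_coe, hF, Finset.mem_sdiff] at he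
    rcases Finset.mem_union.mp he.1 with h | h
    · rcases Finset.mem_union.mp h with h | h <;> exact ((hincmem e _).mp h).1
    · exact ((hincmem e _).mp h).1
  set H := G.deleteEdges ↑F with hH
  have hHG : ∀ u v : V, H.Adj u v → G.Adj u v := fun u v h => (SimpleGraph.deleteEdges_adj.mp h).1
  have hnotF_ex : ex ∉ F := by simp [hF]
  have hnotF_ez : ez ∉ F := by simp [hF]
  have hHxy : H.Adj x y := SimpleGraph.deleteEdges_adj.mpr ⟨hxy, fun hc => hnotF_ex (Finset.mem_coe.mp hc)⟩
  have hHyz : H.Adj y z := SimpleGraph.deleteEdges_adj.mpr ⟨hyz, fun hc => hnotF_ez (Finset.mem_coe.mp hc)⟩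
  have hmemF : ∀ e : Sym2 V, e ∈ G.edgeSet → (x ∈ e ∨ y ∈ e ∨ z ∈ e) → e ≠ ex → e ≠ ez →
      e ∈ F := by
    intro e he hv hne1 hne2
    rw [hF, Finset.mem_sdiff]
    constructor
    · rcases hv with h | h | h
      · exact Finset.mem_union_left _ (Finset.mem_union_left _ ((hincmem e x).mpr ⟨he, h⟩))
      · exact Finset.mem_union_left _ (Finset.mem_union_right _ ((hincmem e y).mpr ⟨he, h⟩))
      · exact Finset.mem_union_right _ ((hincmem e z).mpr ⟨he, h⟩)
    · simp [hne1, hne2]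
  have hEdgeOr : ∀ u v : V, H.Adj u v → (x ∈ s(u,v) ∨ y ∈ s(u,v) ∨ z ∈ s(u,v)) →
      s(u,v) = ex ∨ s(u,v) = ez := by
    intro u v huv hv
    obtain ⟨hadj, hne⟩ := SimpleGraph.deleteEdges_adj.mp huv
    by_contra hcon
    push_neg at hcon
    exact hne (Finset.mem_coe.mpr (hmemF _ ((G.mem_edgeSet).mpr hadj) hv hcon.1 hcon.2))
  have h4 : ∀ u : V, H.Adj u x → u = y := by
    intro u hu
    rcases hEdgeOr u x hu (Or.inl (by simp)) with h | h
    · rw [hexdef, Sym2.eq_iff] at h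
      rcases h with ⟨h1, h2⟩ | ⟨h1, h2⟩
      · exact absurd h2 hxyne
      · exact h1
    · rw [hezdef, Sym2.eq_iff] at h
      rcases h with ⟨h1, h2⟩ | ⟨h1, h2⟩
      · exact absurd h2 hxz
      · exact absurd h2 hxyne
  have h5 : ∀ u : V, H.Adj u z → u = y := by
    intro u hu
    rcases hEdgeOr u z hu (Or.inr (Or.inr (by simp))) with h | h
    · rw [hexdef, Sym2.eq_iff] at h
      rcases h with ⟨h1, h2⟩ | ⟨h1, h2⟩
      · exact absurd h2.symm hyzne
      · exact absurd h2.symm hxz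
    · rw [hezdef, Sym2.eq_iff] at h
      rcases h with ⟨h1, h2⟩ | ⟨h1, h2⟩
      · exact h1
      · exact absurd h2.symm hyzne
  have h7 : ∀ v : V, H.Adj y v → v = x ∨ v = z := by
    intro v hv
    rcases hEdgeOr y v hv (Or.inr (Or.inl (by simp))) with h | h
    · rw [hexdef, Sym2.eq_iff] at h
      rcases h with ⟨h1, h2⟩ | ⟨h1, h2⟩
      · exact absurd h1 hxyne.symm
      · exact Or.inl h2
    · rw [hezdef, Sym2.eq_iff] at h
      rcases h with ⟨h1, h2⟩ | ⟨h1, h2⟩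
      · exact Or.inr h2
      · exact absurd h1 hyzne
  have h6 : ∀ u v : V, H.Adj u v → v ≠ x → v ≠ y → v ≠ z → u ≠ x ∧ u ≠ y ∧ u ≠ z := by
    intro u v huv hvx hvy hvz
    refine ⟨?_, ?_, ?_⟩
    · rintro rfl; exact hvy (h4 v huv.symm)
    · rintro rfl
      rcases h7 v huv with rfl | rfl
      · exact hvx rfl
      · exact hvz rfl
    · rintro rfl; exact hvy (h5 v huv.symm)
  have hkeep : ∀ u v : V, G.Adj u v → u ≠ x → u ≠ y → u ≠ z → v ≠ x → v ≠ y → v ≠ z →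
      H.Adj u v := by
    intro u v hadj hux huy huz hvx hvy hvz
    refine SimpleGraph.deleteEdges_adj.mpr ⟨hadj, ?_⟩
    intro hmem
    rw [Finset.mem_coe, hF, Finset.mem_sdiff] at hmem
    have : x ∈ s(u,v) ∨ y ∈ s(u,v) ∨ z ∈ s(u,v) := by
      rcases Finset.mem_union.mp hmem.1 with h | h
      · rcases Finset.mem_union.mp h with h | h
        · exact Or.inl ((hincmem _ _).mp h).2
        · exact Or.inr (Or.inl ((hincmem _ _).mp h).2)
      · exact Or.inr (Or.inr ((hincmem _ _).mp h).2)
    rcases this with h | h | h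
    · rcases Sym2.mem_iff.mp h with h' | h'
      · exact hux h'.symm
      · exact hvx h'.symm
    · rcases Sym2.mem_iff.mp h with h' | h'
      · exact huy h'.symm
      · exact hvy h'.symm
    · rcases Sym2.mem_iff.mp h with h' | h'
      · exact huz h'.symm
      · exact hvz h'.symm
  -- no isolated vertex in H
  have hbig : ∀ v : V, v ≠ x → v ≠ y → v ≠ z → ∃ u : V, u ≠ x ∧ u ≠ y ∧ u ≠ z ∧ G.Adj v u := by
    intro v _ _ _
    have hns : ¬ (G.neighborFinset v ⊆ {x, y, z}) := by
      intro hsub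
      have h1 := Finset.card_le_card hsub
      have h2 : ({x, y, z} : Finset V).card ≤ 3 := by
        refine le_trans (Finset.card_insert_le _ _) (Nat.succ_le_succ ?_)
        refine le_trans (Finset.card_insert_le _ _) (Nat.succ_le_succ ?_)
        simp
      have h3 := hδ v
      rw [SimpleGraph.degree] at h3
      omega
    obtain ⟨u, huN, humem⟩ := Finset.not_subset.mp hns
    simp only [Finset.mem_insert, Finset.mem_singleton, not_or] at humem
    exact ⟨u, humem.1, humem.2.1, humem.2.2, (SimpleGraph.mem_neighborFinset _ _ _).mp huN⟩
  have hniso : ∀ v : V, ∃ u : V, H.Adj u v := by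
    intro v
    rcases eq_or_ne v x with rfl | hvx
    · exact ⟨y, hHxy.symm⟩
    rcases eq_or_ne v y with rfl | hvy
    · exact ⟨x, hHxy⟩
    rcases eq_or_ne v z with rfl | hvz
    · exact ⟨y, hHyz⟩
    obtain ⟨u, h1, h2, h3, hadj⟩ := hbig v hvx hvy hvz
    exact ⟨u, hkeep u v hadj.symm h1 h2 h3 hvx hvy hvz⟩
  -- cardinality bound
  have hFcard : F.card + 4 ≤ G.degree x + G.degree y + G.degree z := by
    have hxm : ex ∈ G.incidenceFinset x := (hincmem _ _).mpr
      ⟨(G.mem_edgeSet).mpr hxy, by simp [hexdef]⟩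
    have hym : ex ∈ G.incidenceFinset y := (hincmem _ _).mpr
      ⟨(G.mem_edgeSet).mpr hxy, by simp [hexdef]⟩
    have hym2 : ez ∈ G.incidenceFinset y := (hincmem _ _).mpr
      ⟨(G.mem_edgeSet).mpr hyz, by simp [hezdef]⟩
    have hzm : ez ∈ G.incidenceFinset z := (hincmem _ _).mpr
      ⟨(G.mem_edgeSet).mpr hyz, by simp [hezdef]⟩
    have hsub2 : F ⊆ (G.incidenceFinset x \ {ex}) ∪ (G.incidenceFinset y \ {ex, ez}) ∪
        (G.incidenceFinset z \ {ez}) := by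
      intro e he
      rw [hF, Finset.mem_sdiff] at he
      obtain ⟨hu, hne⟩ := he
      simp only [Finset.mem_insert, Finset.mem_singleton, not_or] at hne
      rcases Finset.mem_union.mp hu with h | h
      · rcases Finset.mem_union.mp h with h | h
        · exact Finset.mem_union_left _ (Finset.mem_union_left _
            (Finset.mem_sdiff.mpr ⟨h, by simp [hne.1]⟩))
        · exact Finset.mem_union_left _ (Finset.mem_union_right _
            (Finset.mem_sdiff.mpr ⟨h, by simp [hne.1, hne.2]⟩))
      · exact Finset.mem_union_right _ (Finset.mem_sdiff.mpr ⟨h, by simp [hne.2]⟩)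
    have c1 : (G.incidenceFinset x \ {ex}).card = G.degree x - 1 := by
      rw [Finset.card_sdiff_of_subset (Finset.singleton_subset_iff.mpr hxm), Finset.card_singleton,
        SimpleGraph.card_incidenceFinset_eq_degree]
    have c2 : (G.incidenceFinset y \ {ex, ez}).card = G.degree y - 2 := by
      rw [Finset.card_sdiff_of_subset (Finset.insert_subset hym (Finset.singleton_subset_iff.mpr hym2)),
        SimpleGraph.card_incidenceFinset_eq_degree,
        Finset.card_insert_of_notMem (by simp [hexez]), Finset.card_singleton]
    have c3 : (G.incidenceFinset z \ {ez}).card = G.degree z - 1 := by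
      rw [Finset.card_sdiff_of_subset (Finset.singleton_subset_iff.mpr hzm), Finset.card_singleton,
        SimpleGraph.card_incidenceFinset_eq_degree]
    have hle : F.card ≤ (G.incidenceFinset x \ {ex}).card +
        (G.incidenceFinset y \ {ex, ez}).card + (G.incidenceFinset z \ {ez}).card :=
      le_trans (Finset.card_le_card hsub2)
        (le_trans (Finset.card_union_le _ _) (Nat.add_le_add_right (Finset.card_union_le _ _) _))
    have d1 := hδ x
    have d2 := hδ y
    have d3 := hδ z
    omega
  -- domination argument
  obtain ⟨S, ⟨hSdom, hSres⟩, hScard⟩ := trds_exists_min H hniso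
  have hyS : y ∈ S := by
    obtain ⟨u, huS, hux⟩ := hSdom x
    rwa [h4 u hux] at huS
  have hxS : x ∈ S := by
    by_contra hxS
    obtain ⟨w, hwS, hwx⟩ := hSres x hxS
    rw [h4 w hwx] at hwS
    exact hwS hyS
  have hzS : z ∈ S := by
    by_contra hzS
    obtain ⟨w, hwS, hwz⟩ := hSres z hzS
    rw [h5 w hwz] at hwS
    exact hwS hyS
  set D : Finset V := S \ {x, y, z} with hD
  have hxyzsub : ({x, y, z} : Finset V) ⊆ S := by
    intro v hv
    simp only [Finset.mem_insert, Finset.mem_singleton] at hv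
    rcases hv with rfl | rfl | rfl <;> assumption
  have hc3 : ({x, y, z} : Finset V).card = 3 := by
    rw [Finset.card_insert_of_notMem (by simp [hxyne, hxz]),
      Finset.card_insert_of_notMem (by simp [hyzne]), Finset.card_singleton]
  have hDcard : D.card + 3 = S.card := by
    rw [hD, ← hc3]
    exact Finset.card_sdiff_add_card_eq_card hxyzsub
  have hxD : x ∉ D := by simp [hD]
  have hyD : y ∉ D := by simp [hD]
  have hzD : z ∉ D := by simp [hD]
  have P1 : ∀ v : V, v ≠ x → v ≠ y → v ≠ z → ∃ u ∈ D, G.Adj u v := by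
    intro v h1 h2 h3
    obtain ⟨u, huS, hadj⟩ := hSdom v
    obtain ⟨u1, u2, u3⟩ := h6 u v hadj h1 h2 h3
    exact ⟨u, Finset.mem_sdiff.mpr ⟨huS, by simp [u1, u2, u3]⟩, hHG u v hadj⟩
  have P2 : ∀ v : V, v ≠ x → v ≠ y → v ≠ z → v ∉ D →
      ∃ w : V, (w ∉ D ∧ w ≠ x ∧ w ≠ y ∧ w ≠ z) ∧ G.Adj w v := by
    intro v h1 h2 h3 hvD
    have hvS : v ∉ S := fun hvS => hvD (Finset.mem_sdiff.mpr ⟨hvS, by simp [h1, h2, h3]⟩)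
    obtain ⟨w, hwS, hadj⟩ := hSres v hvS
    obtain ⟨w1, w2, w3⟩ := h6 w v hadj h1 h2 h3
    exact ⟨w, ⟨fun hwD => hwS (Finset.mem_sdiff.mp hwD).1, w1, w2, w3⟩, hHG w v hadj⟩
  have hfin : G.totalRestrainedDominationNumber ≤ D.card + 2 := by
    by_cases hA : ∃ c, G.Adj z c ∧ c ∉ D ∧ c ≠ x ∧ c ≠ y
    · obtain ⟨c, hc1, hc2, hc3', hc4⟩ := hA
      have hT : G.IsTotalRestrainedDominatingSet (D ∪ {x, y}) := by
        constructor
        · intro v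
          rcases eq_or_ne v x with rfl | hvx
          · exact ⟨y, by simp, hxy.symm⟩
          rcases eq_or_ne v y with rfl | hvy
          · exact ⟨x, by simp, hxy⟩
          rcases eq_or_ne v z with rfl | hvz
          · exact ⟨y, by simp, hyz⟩
          obtain ⟨u, huD, hadj⟩ := P1 v hvx hvy hvz
          exact ⟨u, Finset.mem_union_left _ huD, hadj⟩
        · intro v hv
          have hvx : v ≠ x := fun h => hv (by simp [h])
          have hvy : v ≠ y := fun h => hv (by simp [h])
          have hvD : v ∉ D := fun h => hv (Finset.mem_union_left _ h)
          rcases eq_or_ne v z with rfl | hvz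
          · exact ⟨c, by simp [Finset.mem_union, hc2, hc3', hc4], hc1.symm⟩
          obtain ⟨w, ⟨hw1, hw2, hw3, _⟩, hadj⟩ := P2 v hvx hvy hvz hvD
          exact ⟨w, by simp [Finset.mem_union, hw1, hw2, hw3], hadj⟩
      refine le_trans (trds_le G _ hT) ?_
      have : ({x, y} : Finset V).card ≤ 2 := le_trans (Finset.card_insert_le _ _) (by simp)
      have := Finset.card_union_le D ({x, y} : Finset V)
      omega
    by_cases hB : ∃ a, G.Adj x a ∧ a ∉ D ∧ a ≠ y ∧ a ≠ z
    · obtain ⟨a, ha1, ha2, ha3, ha4⟩ := hB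
      have hT : G.IsTotalRestrainedDominatingSet (D ∪ {y, z}) := by
        constructor
        · intro v
          rcases eq_or_ne v x with rfl | hvx
          · exact ⟨y, by simp, hxy.symm⟩
          rcases eq_or_ne v y with rfl | hvy
          · exact ⟨z, by simp, hyz.symm⟩
          rcases eq_or_ne v z with rfl | hvz
          · exact ⟨y, by simp, hyz⟩
          obtain ⟨u, huD, hadj⟩ := P1 v hvx hvy hvz
          exact ⟨u, Finset.mem_union_left _ huD, hadj⟩
        · intro v hv
          have hvy : v ≠ y := fun h => hv (by simp [h])
          have hvz : v ≠ z := fun h => hv (by simp [h])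
          have hvD : v ∉ D := fun h => hv (Finset.mem_union_left _ h)
          rcases eq_or_ne v x with rfl | hvx
          · exact ⟨a, by simp [Finset.mem_union, ha2, ha3, ha4], ha1.symm⟩
          obtain ⟨w, ⟨hw1, _, hw3, hw4⟩, hadj⟩ := P2 v hvx hvy hvz hvD
          exact ⟨w, by simp [Finset.mem_union, hw1, hw3, hw4], hadj⟩
      refine le_trans (trds_le G _ hT) ?_
      have : ({y, z} : Finset V).card ≤ 2 := le_trans (Finset.card_insert_le _ _) (by simp)
      have := Finset.card_union_le D ({y, z} : Finset V)
      omega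
    · push_neg at hA hB
      -- x has a neighbor in D
      have hxDnb : ∃ u ∈ D, G.Adj x u := by
        have hns : ¬ (G.neighborFinset x ⊆ {y, z}) := by
          intro hsub
          have h1 := Finset.card_le_card hsub
          have h2 : ({y, z} : Finset V).card ≤ 2 := le_trans (Finset.card_insert_le _ _) (by simp)
          have h3 := hδ x
          rw [SimpleGraph.degree] at h3
          omega
        obtain ⟨u, huN, humem⟩ := Finset.not_subset.mp hns
        simp only [Finset.mem_insert, Finset.mem_singleton, not_or] at humem
        have hadj : G.Adj x u := (SimpleGraph.mem_neighborFinset _ _ _).mp huN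
        have huD : u ∈ D := by
          by_contra huD
          exact humem.2 (hB u hadj huD humem.1)
        exact ⟨u, huD, hadj⟩
      have hzDnb : ∃ u ∈ D, G.Adj z u := by
        have hns : ¬ (G.neighborFinset z ⊆ {x, y}) := by
          intro hsub
          have h1 := Finset.card_le_card hsub
          have h2 : ({x, y} : Finset V).card ≤ 2 := le_trans (Finset.card_insert_le _ _) (by simp)
          have h3 := hδ z
          rw [SimpleGraph.degree] at h3
          omega
        obtain ⟨u, huN, humem⟩ := Finset.not_subset.mp hns
        simp only [Finset.mem_insert, Finset.mem_singleton, not_or] at humem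
        have hadj : G.Adj z u := (SimpleGraph.mem_neighborFinset _ _ _).mp huN
        have huD : u ∈ D := by
          by_contra huD
          exact humem.2 (hA u hadj huD humem.1)
        exact ⟨u, huD, hadj⟩
      obtain ⟨u, huD, hu⟩ := hxDnb
      obtain ⟨u', hu'D, hu'⟩ := hzDnb
      have hT : G.IsTotalRestrainedDominatingSet (D ∪ {x}) := by
        constructor
        · intro v
          rcases eq_or_ne v x with rfl | hvx
          · exact ⟨u, Finset.mem_union_left _ huD, hu.symm⟩
          rcases eq_or_ne v y with rfl | hvy
          · exact ⟨x, by simp, hxy⟩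
          rcases eq_or_ne v z with rfl | hvz
          · exact ⟨u', Finset.mem_union_left _ hu'D, hu'.symm⟩
          obtain ⟨w, hwD, hadj⟩ := P1 v hvx hvy hvz
          exact ⟨w, Finset.mem_union_left _ hwD, hadj⟩
        · intro v hv
          have hvx : v ≠ x := fun h => hv (by simp [h])
          have hvD : v ∉ D := fun h => hv (Finset.mem_union_left _ h)
          rcases eq_or_ne v y with rfl | hvy
          · exact ⟨z, by simp [Finset.mem_union, hzD, hxz.symm], hyz.symm⟩
          rcases eq_or_ne v z with rfl | hvz
          · exact ⟨y, by simp [Finset.mem_union, hyD, hxyne.symm], hyz⟩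
          obtain ⟨w, ⟨hw1, hw2, _, _⟩, hadj⟩ := P2 v hvx hvy hvz hvD
          exact ⟨w, by simp [Finset.mem_union, hw1, hw2], hadj⟩
      refine le_trans (trds_le G _ hT) ?_
      have := Finset.card_union_le D ({x} : Finset V)
      simp only [Finset.card_singleton] at this
      omega
  refine ⟨F, hFsub, hFcard, hniso, ?_⟩
  rw [← hH]
  omega

/-- `b_tr(G) ≤ ξ(G) + Δ(G) - 2` for connected graphs with `δ ≥ 4`. -/
theorem statement_10 {V : Type*} [Fintype V] [DecidableEq V] (G : SimpleGraph V)
    [DecidableRel G.Adj] (hconn : G.Connected) (hδ : 4 ≤ G.minDegree)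
    (hcard : 5 ≤ Fintype.card V) :
    G.totalRestrainedBondageNumber ≤ ((G.minEdgeDegree + G.maxDegree - 2 : ℕ) : ℕ∞) := by
  classical
  have hdeg : ∀ v : V, 4 ≤ G.degree v := fun v => le_trans hδ (G.minDegree_le_degree v)
  have hVne : Nonempty V := Fintype.card_pos_iff.mp (by omega)
  obtain ⟨v0⟩ := hVne
  have hd0 : 0 < G.degree v0 := lt_of_lt_of_le (by norm_num) (hdeg v0)
  obtain ⟨w0, hw0⟩ := Finset.card_pos.mp hd0
  have hadj0 : G.Adj v0 w0 := (G.mem_neighborFinset v0 w0).mp hw0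
  have hsetne : {k : ℕ | ∃ d : G.Dart, G.degree d.toProd.1 + G.degree d.toProd.2 - 2 = k}.Nonempty :=
    ⟨_, ⟨(v0, w0), hadj0⟩, rfl⟩
  have hximem : G.minEdgeDegree ∈
      {k : ℕ | ∃ d : G.Dart, G.degree d.toProd.1 + G.degree d.toProd.2 - 2 = k} :=
    Nat.sInf_mem hsetne
  obtain ⟨d, hd⟩ := hximem
  set x := d.toProd.1 with hxdef
  set y := d.toProd.2 with hydef
  have hxy : G.Adj x y := d.adj
  -- choose z, a neighbour of y distinct from x
  have hns : ¬ (G.neighborFinset y ⊆ {x}) := by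
    intro hsub
    have h1 := Finset.card_le_card hsub
    have h3 := hdeg y
    rw [SimpleGraph.degree] at h3
    simp only [Finset.card_singleton] at h1
    omega
  obtain ⟨z, hzN, hzx⟩ := Finset.not_subset.mp hns
  have hyz : G.Adj y z := (G.mem_neighborFinset y z).mp hzN
  have hxz : x ≠ z := fun h => hzx (Finset.mem_singleton.mpr h.symm)
  obtain ⟨F, hsub, hc, hni, hlt⟩ := key_lemma G hdeg x y z hxy hyz hxz
  have hmem : (F.card : ℕ∞) ∈ {k : ℕ∞ | ∃ F : Finset (Sym2 V), ↑F ⊆ G.edgeSet ∧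
      (F.card : ℕ∞) = k ∧ (∀ v : V, ∃ u : V, (G.deleteEdges ↑F).Adj u v) ∧
      G.totalRestrainedDominationNumber < (G.deleteEdges ↑F).totalRestrainedDominationNumber} :=
    ⟨F, hsub, rfl, hni, hlt⟩
  refine le_trans (sInf_le hmem) ?_
  rw [Nat.cast_le]
  have hdz : G.degree z ≤ G.maxDegree := G.degree_le_maxDegree z
  have h4x := hdeg x
  have h4y := hdeg y
  have h4z := hdeg z
  omega
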